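/- Let u_1, ..., u_k ∈ ℝ^n with k ≤ n+1, rank U = k−1 where U = [u_1 − u_k, ..., u_{k−1} − u_k], and let f(x) = F_{k−1}(U†(x − u_k)) with U† = (UᵀU)^{−1}Uᵀ. Then every local minimizer of f is a global minimizer of f (i.e., a zero of f). -/

import Mathlib

private lemma pair_sq' {m : ℕ} (a : Fin m → ℝ) :
    2 * ∑ i, ∑ j ∈ Finset.Ioi i, a i * a j = (∑ i, a i) ^ 2 - ∑ i, (a i) ^ 2 := by
  have h := Finset.sum_sum_Ioi_add_eq_sum_sum_off_diag (fun i j : Fin m => a i * a j)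
  have h1 : ∑ i, ∑ j ∈ Finset.Ioi i, ((fun i j : Fin m => a i * a j) j i
        + (fun i j : Fin m => a i * a j) i j)
      = 2 * ∑ i, ∑ j ∈ Finset.Ioi i, a i * a j := by
    rw [Finset.mul_sum]
    refine Finset.sum_congr rfl fun i _ => ?_
    rw [Finset.mul_sum]
    exact Finset.sum_congr rfl fun j _ => by ring
  rw [h1] at h
  rw [h]
  have h2 : ∀ i : Fin m, ∑ j ∈ ({i}ᶜ : Finset (Fin m)), a j * a i
      = (∑ j, a j) * a i - a i * a i := by
    intro i
    rw [← Finset.sum_mul, Fintype.sum_eq_add_sum_compl i a]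
    ring
  have h4 : ∑ i : Fin m, ∑ j ∈ ({i}ᶜ : Finset (Fin m)), a j * a i
      = ∑ i, ((∑ j, a j) * a i - a i * a i) := Finset.sum_congr rfl fun i _ => h2 i
  have h3 : ∑ i, a i * a i = ∑ i, (a i) ^ 2 :=
    Finset.sum_congr rfl fun i _ => (sq (a i)).symm
  have hfin : ∑ i : Fin m, ∑ j ∈ ({i}ᶜ : Finset (Fin m)), a j * a i
      = (∑ i, a i) ^ 2 - ∑ i, (a i) ^ 2 := by
    rw [h4, Finset.sum_sub_distrib, ← Finset.mul_sum, h3]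
    ring
  convert hfin using 4

set_option maxHeartbeats 2000000 in
theorem stmt_12 (n m : ℕ) (hmn : m ≤ n) (u : Fin (m + 1) → (Fin n → ℝ))
    (U : Matrix (Fin n) (Fin m) ℝ)
    (hU : ∀ i j, U i j = u j.castSucc i - u (Fin.last m) i)
    (hrank : U.rank = m)
    (Udag : Matrix (Fin m) (Fin n) ℝ) (hUdag : Udag = (U.transpose * U)⁻¹ * U.transpose)
    (F : (Fin m → ℝ) → ℝ)
    (hF : ∀ z, F z = ∑ i, (z i) ^ 2 * (z i - 1) ^ 2
        + ∑ i, ∑ j ∈ Finset.Ioi i, (z i) ^ 2 * (z j) ^ 2)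
    (f : (Fin n → ℝ) → ℝ)
    (hf : ∀ x, f x = F (Udag.mulVec (x - u (Fin.last m)))) :
    ∀ z, IsLocalMin f z → f z = 0 ∧ ∀ x, f z ≤ f x := by
  classical
  have hUU : Udag * U = 1 := by
    have h1 : (U.transpose * U).rank = m := by
      rw [Matrix.rank_transpose_mul_self]; exact hrank
    have h2 : LinearMap.range (U.transpose * U).mulVecLin = ⊤ := by
      apply Submodule.eq_top_of_finrank_eq
      rw [Module.finrank_fin_fun]
      exact h1
    have h3 : Function.Surjective (U.transpose * U).mulVec := by
      intro v
      obtain ⟨x, hx⟩ := LinearMap.range_eq_top.mp h2 v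
      exact ⟨x, hx⟩
    have h4 : IsUnit (U.transpose * U) := Matrix.mulVec_surjective_iff_isUnit.mp h3
    rw [hUdag, Matrix.mul_assoc]
    exact Matrix.nonsing_inv_mul _ ((Matrix.isUnit_iff_isUnit_det _).mp h4)
  intro z hz
  set uK := u (Fin.last m) with huK
  set w := Udag.mulVec (z - uK) with hw
  have hFnn : ∀ v : Fin m → ℝ, 0 ≤ F v := by
    intro v; rw [hF]; positivity
  suffices hFw : F w = 0 by
    constructor
    · rw [hf z, ← hw]; exact hFw
    · intro x
      rw [hf z, ← hw, hFw, hf x]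
      exact hFnn _
  -- transfer local min to F
  have hψ : ∀ v : Fin m → ℝ, Udag.mulVec (z + U.mulVec (v - w) - uK) = v := by
    intro v
    have e1 : z + U.mulVec (v - w) - uK = (z - uK) + U.mulVec (v - w) := by
      funext i; simp only [Pi.add_apply, Pi.sub_apply]; ring
    rw [e1, Matrix.mulVec_add, ← hw, Matrix.mulVec_mulVec, hUU, Matrix.one_mulVec]
    abel
  have hlocF : IsLocalMin F w := by
    have hc0 : Continuous (fun y : Fin m → ℝ => U.mulVec y) :=
      U.mulVecLin.continuous_of_finiteDimensional
    have hc : Continuous (fun v : Fin m → ℝ => z + U.mulVec (v - w)) :=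
      continuous_const.add (hc0.comp (continuous_id.sub continuous_const))
    have htend : Filter.Tendsto (fun v : Fin m → ℝ => z + U.mulVec (v - w))
        (nhds w) (nhds z) := by
      have h := hc.continuousAt (x := w)
      simpa [ContinuousAt, sub_self, Matrix.mulVec_zero] using h
    have hev := htend.eventually hz
    refine Filter.Eventually.mono hev ?_
    intro v hv
    rw [hf z, ← hw, hf (z + U.mulVec (v - w)), hψ v] at hv
    exact hv
  -- local min in each coordinate
  have hlocg : ∀ i : Fin m, IsLocalMin (fun t => F (Function.update w i t)) (w i) := by
    intro i
    have hcont : Continuous (fun t : ℝ => Function.update w i t) := by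
      apply continuous_pi
      intro j
      simp only [Function.update_apply]
      by_cases hji : j = i
      · simpa [hji] using continuous_id'
      · simpa [hji] using continuous_const
    have htend : Filter.Tendsto (fun t : ℝ => Function.update w i t)
        (nhds (w i)) (nhds w) := by
      have h := hcont.continuousAt (x := w i)
      simpa [ContinuousAt, Function.update_eq_self] using h
    refine Filter.Eventually.mono (htend.eventually hlocF) fun t ht => ?_
    simpa [Function.update_eq_self] using ht
  set A : Fin m → ℝ := fun i => ∑ j ∈ ({i}ᶜ : Finset (Fin m)), (w j) ^ 2 with hA
  -- expansion of F along coordinate i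
  have hupd : ∀ i : Fin m, ∃ Ci : ℝ, ∀ t : ℝ,
      F (Function.update w i t) = t ^ 4 - 2 * t ^ 3 + (1 + A i) * t ^ 2 + Ci := by
    intro i
    refine ⟨(∑ j ∈ ({i}ᶜ : Finset (Fin m)), (w j) ^ 2 * (w j - 1) ^ 2)
      + ((A i) ^ 2 - ∑ j ∈ ({i}ᶜ : Finset (Fin m)), ((w j) ^ 2) ^ 2) / 2, fun t => ?_⟩
    set zz := Function.update w i t with hzz
    have hzi : zz i = t := Function.update_self i t w
    have hzj : ∀ j ∈ ({i}ᶜ : Finset (Fin m)), zz j = w j := by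
      intro j hj
      have hji : j ≠ i := by simpa using hj
      exact Function.update_of_ne hji t w
    have e1 : ∑ j, (zz j) ^ 2 * (zz j - 1) ^ 2
        = t ^ 2 * (t - 1) ^ 2 + ∑ j ∈ ({i}ᶜ : Finset (Fin m)), (w j) ^ 2 * (w j - 1) ^ 2 := by
      rw [Fintype.sum_eq_add_sum_compl i, hzi]
      congr 1
      exact Finset.sum_congr rfl fun j hj => by rw [hzj j hj]
    have e2 : ∑ j, (zz j) ^ 2 = t ^ 2 + A i := by
      rw [Fintype.sum_eq_add_sum_compl i, hzi]
      simp only [hA]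
      congr 1
      exact Finset.sum_congr rfl fun j hj => by rw [hzj j hj]
    have e3 : ∑ j, ((zz j) ^ 2) ^ 2
        = (t ^ 2) ^ 2 + ∑ j ∈ ({i}ᶜ : Finset (Fin m)), ((w j) ^ 2) ^ 2 := by
      rw [Fintype.sum_eq_add_sum_compl i, hzi]
      congr 1
      exact Finset.sum_congr rfl fun j hj => by rw [hzj j hj]
    have e4 := pair_sq' (fun j => (zz j) ^ 2)
    rw [e2, e3] at e4
    have e5 : ∑ j, ∑ l ∈ Finset.Ioi j, (zz j) ^ 2 * (zz l) ^ 2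
        = ((t ^ 2 + A i) ^ 2 - ((t ^ 2) ^ 2
            + ∑ j ∈ ({i}ᶜ : Finset (Fin m)), ((w j) ^ 2) ^ 2)) / 2 := by
      linarith
    rw [hF, e1, e5]
    ring
  have hmin : ∀ i : Fin m, ∃ Ci : ℝ,
      IsLocalMin (fun t : ℝ => t ^ 4 - 2 * t ^ 3 + (1 + A i) * t ^ 2 + Ci) (w i) := by
    intro i
    obtain ⟨Ci, hCi⟩ := hupd i
    refine ⟨Ci, ?_⟩
    have h := hlocg i
    rwa [show (fun t : ℝ => F (Function.update w i t))
        = (fun t : ℝ => t ^ 4 - 2 * t ^ 3 + (1 + A i) * t ^ 2 + Ci) from funext hCi] at h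
  have foc : ∀ i : Fin m, w i * (2 * (w i) ^ 2 - 3 * (w i) + (1 + A i)) = 0 := by
    intro i
    obtain ⟨Ci, hg⟩ := hmin i
    have hd : HasDerivAt (fun t : ℝ => t ^ 4 - 2 * t ^ 3 + (1 + A i) * t ^ 2 + Ci)
        (4 * (w i) ^ 3 - 2 * (3 * (w i) ^ 2) + (1 + A i) * (2 * (w i))) (w i) := by
      have h1 : HasDerivAt (fun t : ℝ => t ^ 4) (4 * (w i) ^ 3) (w i) := by
        simpa using hasDerivAt_pow 4 (w i)
      have h2 : HasDerivAt (fun t : ℝ => 2 * t ^ 3) (2 * (3 * (w i) ^ 2)) (w i) := by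
        simpa using (hasDerivAt_pow 3 (w i)).const_mul (2 : ℝ)
      have h3 : HasDerivAt (fun t : ℝ => (1 + A i) * t ^ 2) ((1 + A i) * (2 * (w i))) (w i) := by
        simpa using (hasDerivAt_pow 2 (w i)).const_mul (1 + A i)
      exact ((h1.sub h2).add h3).add_const Ci
    have h0 := hg.hasDerivAt_eq_zero hd
    linear_combination h0 / 2
  have hAnn : ∀ i, 0 ≤ A i := by
    intro i
    simp only [hA]
    exact Finset.sum_nonneg fun j _ => sq_nonneg _
  have hrange : ∀ i, w i ≠ 0 → 1 / 2 ≤ w i ∧ w i ≤ 1 := by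
    intro i hi
    have hq : 2 * (w i) ^ 2 - 3 * (w i) + (1 + A i) = 0 := by
      rcases mul_eq_zero.mp (foc i) with h' | h'
      · exact absurd h' hi
      · exact h'
    have hAi := hAnn i
    constructor <;> nlinarith [hq, hAi]
  have hAle : ∀ i, w i ≠ 0 → A i ≤ 1 / 8 := by
    intro i hi
    have hq : 2 * (w i) ^ 2 - 3 * (w i) + (1 + A i) = 0 := by
      rcases mul_eq_zero.mp (foc i) with h' | h'
      · exact absurd h' hi
      · exact h'
    nlinarith [hq, sq_nonneg (w i - 3 / 4)]
  have honlyone : ∀ i j : Fin m, i ≠ j → w i ≠ 0 → w j ≠ 0 → False := by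
    intro i j hij hi hj
    have h1 := hAle i hi
    have h2 := (hrange j hj).1
    have h3 : (w j) ^ 2 ≤ A i := by
      simp only [hA]
      refine Finset.single_le_sum (fun l _ => sq_nonneg (w l)) ?_
      simp [Ne.symm hij]
    nlinarith [h1, h2, h3]
  by_cases hall : ∀ i, w i = 0
  · rw [hF]
    simp [hall]
  · push_neg at hall
    obtain ⟨i, hi⟩ := hall
    have hothers : ∀ j, j ≠ i → w j = 0 := by
      intro j hj
      by_contra hjn
      exact honlyone i j (Ne.symm hj) hi hjn
    have hAi : A i = 0 := by
      simp only [hA]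
      apply Finset.sum_eq_zero
      intro j hj
      have hji : j ≠ i := by simpa using hj
      rw [hothers j hji]
      ring
    have hq : 2 * (w i) ^ 2 - 3 * (w i) + 1 = 0 := by
      rcases mul_eq_zero.mp (foc i) with h' | h'
      · exact absurd h' hi
      · rw [hAi] at h'; linarith
    have hcase : w i = 1 / 2 ∨ w i = 1 := by
      have hfac : (2 * (w i) - 1) * ((w i) - 1) = 0 := by linear_combination hq
      rcases mul_eq_zero.mp hfac with h' | h'
      · left; linarith
      · right; linarith
    rcases hcase with hs | hs
    · -- w i = 1/2 : contradict local minimality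
      exfalso
      obtain ⟨Ci, hg⟩ := hmin i
      rw [hAi, hs] at hg
      obtain ⟨ε, hε, hball⟩ := Metric.eventually_nhds_iff.mp hg
      set e : ℝ := (min ε 1) / 4 with he
      have hm : 0 < min ε 1 := lt_min hε one_pos
      have hepos : 0 < e := by rw [he]; linarith
      have h1 : e ≤ 1 / 2 := by
        have := min_le_right ε 1
        rw [he]; linarith
      have h2 : e < ε := by
        have := min_le_left ε 1
        rw [he]; linarith
      have hdist : dist ((1 : ℝ) / 2 + e) (1 / 2) < ε := by
        rw [Real.dist_eq]
        have : (1 : ℝ) / 2 + e - 1 / 2 = e := by ring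
        rw [this, abs_of_pos hepos]
        exact h2
      have hle := hball hdist
      simp only [] at hle
      have he2 : e ^ 2 ≤ 1 / 4 := by nlinarith
      nlinarith [hle, hepos, he2, mul_pos hepos hepos]
    · -- w i = 1 : F w = 0
      rw [hF]
      have hterm1 : ∀ j, (w j) ^ 2 * (w j - 1) ^ 2 = 0 := by
        intro j
        by_cases hji : j = i
        · rw [hji, hs]; ring
        · rw [hothers j hji]; ring
      have hterm2 : ∀ j l : Fin m, l ∈ Finset.Ioi j → (w j) ^ 2 * (w l) ^ 2 = 0 := by
        intro j l hl
        have hjl : j < l := Finset.mem_Ioi.mp hl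
        by_cases hji : j = i
        · have hli : l ≠ i := by rw [← hji]; exact (ne_of_gt hjl)
          rw [hothers l hli]; ring
        · rw [hothers j hji]; ring
      have hz1 : ∑ j, (w j) ^ 2 * (w j - 1) ^ 2 = 0 :=
        Finset.sum_eq_zero fun j _ => hterm1 j
      have hz2 : ∑ j, ∑ l ∈ Finset.Ioi j, (w j) ^ 2 * (w l) ^ 2 = 0 :=
        Finset.sum_eq_zero fun j _ => Finset.sum_eq_zero fun l hl => hterm2 j l hl
      rw [hz1, hz2]
      ring
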